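/- Let u < x < v be real numbers and let f : [u,v]_ℚ → ℝ be a function whose derivative f' is defined at every point of [u,v]_ℚ, is uniform on [u,v]_ℚ, and is uniformly continuous, and suppose the extended value f'(x) ≠ 0. Then f(x) (extended value) is not a global extreme of f: there exist b', b'' ∈ [u,v]_ℚ with f(b') < f(x) < f(b''). -/

import Mathlib

open Filter Topology

/-- The rational interval [u,v]_ℚ = {a ∈ ℚ : u ≤ a ≤ v}. -/
def RatIcc (u v : ℝ) : Set ℚ := {a : ℚ | u ≤ (a : ℝ) ∧ (a : ℝ) ≤ v}

/-- Uniform continuity of f : M → ℝ for M ⊆ ℚ. -/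
def UC (M : Set ℚ) (f : ℚ → ℝ) : Prop :=
  ∀ ε : ℝ, 0 < ε → ∃ δ : ℝ, 0 < δ ∧
    ∀ a ∈ M, ∀ b ∈ M, |(a : ℝ) - (b : ℝ)| ≤ δ → |f a - f b| ≤ ε

/-- y is the extended value of f at x: every sequence in M converging to x has
f-images converging to y. -/
def ExtVal (M : Set ℚ) (f : ℚ → ℝ) (x y : ℝ) : Prop :=
  ∀ a : ℕ → ℚ, (∀ n, a n ∈ M) →
    Tendsto (fun n => ((a n : ℝ))) atTop (𝓝 x) →
    Tendsto (fun n => f (a n)) atTop (𝓝 y)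

/-- The derivative of f at a ∈ M equals y. -/
def HasDerivAtPt (M : Set ℚ) (f : ℚ → ℝ) (a : ℚ) (y : ℝ) : Prop :=
  ∀ ε : ℝ, 0 < ε → ∃ δ : ℝ, 0 < δ ∧
    ∀ b ∈ M, 0 < |(b : ℝ) - (a : ℝ)| → |(b : ℝ) - (a : ℝ)| ≤ δ →
      |(f b - f a) / ((b : ℝ) - (a : ℝ)) - y| ≤ ε

/-- The derivative function f' is uniform on D ⊆ M: the difference quotients converge
to f' uniformly in the base point a ∈ D. -/
def UniformDeriv (M : Set ℚ) (f : ℚ → ℝ) (D : Set ℚ) (f' : ℚ → ℝ) : Prop :=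
  ∀ ε : ℝ, 0 < ε → ∃ δ : ℝ, 0 < δ ∧
    ∀ a ∈ D, ∀ b ∈ M, 0 < |(b : ℝ) - (a : ℝ)| → |(b : ℝ) - (a : ℝ)| ≤ δ →
      |(f b - f a) / ((b : ℝ) - (a : ℝ)) - f' a| ≤ ε

/-- Extremes and uniform derivatives: if f : [u,v]_ℚ → ℝ has a derivative f' defined
everywhere, uniform and UC on [u,v]_ℚ, and its extended value at x ∈ (u,v) is nonzero,
then the extended value f(x) is not a global extreme of f. -/
-- sequence approaching x from below within RatIcc
lemma seq_below (u v x : ℝ) (hux : u < x) (hxv : x < v) :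
    ∃ s : ℕ → ℚ, (∀ n, s n ∈ RatIcc u v) ∧ (∀ n, (s n : ℝ) < x) ∧
      (∀ n, x - 1/(n+1) ≤ (s n : ℝ)) ∧
      Tendsto (fun n => ((s n : ℝ))) atTop (𝓝 x) := by
  have h : ∀ n : ℕ, ∃ q : ℚ, max u (x - 1/(n+1)) < (q : ℝ) ∧ (q : ℝ) < x := by
    intro n
    exact exists_rat_btwn (max_lt hux (by
      have : (0:ℝ) < 1/(n+1) := by positivity
      linarith))
  choose s h1 h2 using h
  refine ⟨s, fun n => ⟨(le_max_left _ _).trans (h1 n).le, (h2 n).le.trans hxv.le⟩,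
    h2, fun n => (le_max_right _ _).trans (h1 n).le, ?_⟩
  have hlow : Tendsto (fun n : ℕ => x - 1/(n+1 : ℝ)) atTop (𝓝 x) := by
    have := tendsto_one_div_add_atTop_nhds_zero_nat (𝕜 := ℝ)
    have := tendsto_const_nhds (x := x) (f := atTop (α := ℕ)) |>.sub this
    simpa using this
  exact tendsto_of_tendsto_of_tendsto_of_le_of_le hlow tendsto_const_nhds
    (fun n => (le_max_right _ _).trans (h1 n).le) (fun n => (h2 n).le)

lemma seq_above (u v x : ℝ) (hux : u < x) (hxv : x < v) :
    ∃ s : ℕ → ℚ, (∀ n, s n ∈ RatIcc u v) ∧ (∀ n, x < (s n : ℝ)) ∧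
      (∀ n, (s n : ℝ) ≤ x + 1/(n+1)) ∧
      Tendsto (fun n => ((s n : ℝ))) atTop (𝓝 x) := by
  have h : ∀ n : ℕ, ∃ q : ℚ, x < (q : ℝ) ∧ (q : ℝ) < min v (x + 1/(n+1)) := by
    intro n
    exact exists_rat_btwn (lt_min hxv (by
      have : (0:ℝ) < 1/(n+1) := by positivity
      linarith))
  choose s h1 h2 using h
  refine ⟨s, fun n => ⟨hux.le.trans (h1 n).le, ((h2 n).trans_le (min_le_left _ _)).le⟩,
    h1, fun n => ((h2 n).trans_le (min_le_right _ _)).le, ?_⟩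
  have hhigh : Tendsto (fun n : ℕ => x + 1/(n+1 : ℝ)) atTop (𝓝 x) := by
    have := tendsto_one_div_add_atTop_nhds_zero_nat (𝕜 := ℝ)
    have := tendsto_const_nhds (x := x) (f := atTop (α := ℕ)) |>.add this
    simpa using this
  exact tendsto_of_tendsto_of_tendsto_of_le_of_le tendsto_const_nhds hhigh
    (fun n => (h1 n).le) (fun n => ((h2 n).trans_le (min_le_right _ _)).le)

lemma key (u v x : ℝ) (hux : u < x) (hxv : x < v) (f f' : ℚ → ℝ)
    (hunif : UniformDeriv (RatIcc u v) f (RatIcc u v) f')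
    (fx f'x : ℝ)
    (hfx : ExtVal (RatIcc u v) f x fx)
    (hf'x : ExtVal (RatIcc u v) f' x f'x)
    (hpos : 0 < f'x) :
    ∃ b' ∈ RatIcc u v, ∃ b'' ∈ RatIcc u v, f b' < fx ∧ fx < f b'' := by
  obtain ⟨δ, hδ, hQ⟩ := hunif (f'x/4) (by linarith)
  set η := min (δ/2) 1 with hη
  have hη0 : 0 < η := by positivity
  have hηδ : η ≤ δ/2 := min_le_left _ _
  -- pick b above x
  obtain ⟨b, hb1, hb2⟩ := exists_rat_btwn (lt_min hxv (by linarith : x < x + η))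
  have hbv : (b:ℝ) < v := hb2.trans_le (min_le_left _ _)
  have hbx : (b:ℝ) ≤ x + η := (hb2.trans_le (min_le_right _ _)).le
  have hbM : b ∈ RatIcc u v := ⟨(hux.trans hb1).le, hbv.le⟩
  -- pick a below x
  obtain ⟨a, ha1, ha2⟩ := exists_rat_btwn (max_lt hux (by linarith : x - η < x))
  have hau : u < (a:ℝ) := (le_max_left _ _).trans_lt ha1
  have hax : x - η ≤ (a:ℝ) := ((le_max_right _ _).trans_lt ha1).le
  have haM : a ∈ RatIcc u v := ⟨hau.le, (ha2.trans hxv).le⟩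
  obtain ⟨s, hsM, hsx, hslb, hst⟩ := seq_below u v x hux hxv
  obtain ⟨t, htM, htx, htub, htt⟩ := seq_above u v x hux hxv
  have hfs := hfx s hsM hst
  have hf's := hf'x s hsM hst
  have hft := hfx t htM htt
  have hf't := hf'x t htM htt
  -- eventually 1/(n+1) ≤ η
  have hev : ∀ᶠ n : ℕ in atTop, 1/(n+1 : ℝ) ≤ η :=
    tendsto_one_div_add_atTop_nhds_zero_nat.eventually (eventually_le_nhds hη0)
  refine ⟨a, haM, b, hbM, ?_, ?_⟩
  · -- f a < fx : use base points t n
    have hkey : ∀ᶠ n : ℕ in atTop,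
        0 ≤ f (t n) - f a - (f' (t n) - f'x/4) * ((t n : ℝ) - a) := by
      filter_upwards [hev] with n hn
      have h1 : (a:ℝ) < t n := ha2.trans (htx n)
      have h2 : |(a:ℝ) - (t n : ℝ)| ≤ δ := by
        rw [abs_sub_comm, abs_of_pos (by linarith)]
        have := htub n
        linarith
      have h3 : 0 < |(a:ℝ) - (t n : ℝ)| := by
        rw [abs_sub_comm, abs_of_pos (by linarith)]; linarith
      have := hQ (t n) (htM n) a haM h3 h2
      have hquot : f' (t n) - f'x/4 ≤ (f a - f (t n)) / ((a:ℝ) - t n) := by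
        have := abs_le.mp this
        linarith [this.1]
      have hne : (a:ℝ) - (t n : ℝ) ≠ 0 := by linarith
      have hflip : (f a - f (t n)) / ((a:ℝ) - t n) = (f (t n) - f a) / ((t n : ℝ) - a) := by
        rw [← neg_div_neg_eq]; ring_nf
      rw [hflip] at hquot
      have hpos' : (0:ℝ) < (t n : ℝ) - a := by linarith
      nlinarith [(le_div_iff₀ hpos').mp hquot]
    have hlim : Tendsto (fun n => f (t n) - f a - (f' (t n) - f'x/4) * ((t n : ℝ) - a))
        atTop (𝓝 (fx - f a - (f'x - f'x/4) * (x - a))) :=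
      (hft.sub tendsto_const_nhds).sub ((hf't.sub tendsto_const_nhds).mul
        (htt.sub tendsto_const_nhds))
    have := ge_of_tendsto hlim hkey
    nlinarith [ha2, hpos]
  · -- fx < f b : use base points s n
    have hkey : ∀ᶠ n : ℕ in atTop,
        0 ≤ f b - f (s n) - (f' (s n) - f'x/4) * ((b : ℝ) - s n) := by
      filter_upwards [hev] with n hn
      have h1 : (s n : ℝ) < b := (hsx n).trans hb1
      have h2 : |(b:ℝ) - (s n : ℝ)| ≤ δ := by
        rw [abs_of_pos (by linarith)]
        have := hslb n
        linarith
      have h3 : 0 < |(b:ℝ) - (s n : ℝ)| := by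
        rw [abs_of_pos (by linarith)]; linarith
      have := hQ (s n) (hsM n) b hbM h3 h2
      have hquot : f' (s n) - f'x/4 ≤ (f b - f (s n)) / ((b:ℝ) - s n) := by
        have := abs_le.mp this
        linarith [this.1]
      have hpos' : (0:ℝ) < (b : ℝ) - s n := by linarith
      nlinarith [(le_div_iff₀ hpos').mp hquot]
    have hlim : Tendsto (fun n => f b - f (s n) - (f' (s n) - f'x/4) * ((b : ℝ) - s n))
        atTop (𝓝 (f b - fx - (f'x - f'x/4) * ((b:ℝ) - x))) :=
      (tendsto_const_nhds.sub hfs).sub ((hf's.sub tendsto_const_nhds).mul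
        (tendsto_const_nhds.sub hst))
    have := ge_of_tendsto hlim hkey
    nlinarith [hb1, hpos]
lemma neg_unif (M D : Set ℚ) (f f' : ℚ → ℝ) (h : UniformDeriv M f D f') :
    UniformDeriv M (fun q => -f q) D (fun q => -f' q) := by
  intro ε hε
  obtain ⟨δ, hδ, hq⟩ := h ε hε
  refine ⟨δ, hδ, fun a ha b hb h1 h2 => ?_⟩
  have := hq a ha b hb h1 h2
  calc |(-f b - -f a) / ((b:ℝ) - a) - -f' a|
      = |-((f b - f a) / ((b:ℝ) - a) - f' a)| := by
        congr 1; field_simp; ring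
    _ = |(f b - f a) / ((b:ℝ) - a) - f' a| := abs_neg _
    _ ≤ ε := this

lemma neg_ext (M : Set ℚ) (f : ℚ → ℝ) (x y : ℝ) (h : ExtVal M f x y) :
    ExtVal M (fun q => -f q) x (-y) := fun a hM hx => (h a hM hx).neg

theorem extremes_and_uniform_derivatives' (u v x : ℝ) (hux : u < x) (hxv : x < v)
    (f f' : ℚ → ℝ)
    (hunif : UniformDeriv (RatIcc u v) f (RatIcc u v) f')
    (fx f'x : ℝ)
    (hfx : ExtVal (RatIcc u v) f x fx)
    (hf'x : ExtVal (RatIcc u v) f' x f'x)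
    (hne : f'x ≠ 0) :
    ∃ b' ∈ RatIcc u v, ∃ b'' ∈ RatIcc u v, f b' < fx ∧ fx < f b'' := by
  rcases hne.lt_or_gt with h | h
  · obtain ⟨b', hb', b'', hb'', h1, h2⟩ := key u v x hux hxv
      (fun q => -f q) (fun q => -f' q) (neg_unif _ _ _ _ hunif) (-fx) (-f'x)
      (neg_ext _ _ _ _ hfx) (neg_ext _ _ _ _ hf'x) (by linarith)
    exact ⟨b'', hb'', b', hb', by linarith, by linarith⟩
  · exact key u v x hux hxv f f' hunif fx f'x hfx hf'x h


theorem extremes_and_uniform_derivatives (u v x : ℝ) (hux : u < x) (hxv : x < v)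
    (f f' : ℚ → ℝ)
    (hderiv : ∀ a ∈ RatIcc u v, HasDerivAtPt (RatIcc u v) f a (f' a))
    (hunif : UniformDeriv (RatIcc u v) f (RatIcc u v) f')
    (hUC : UC (RatIcc u v) f')
    (fx f'x : ℝ)
    (hfx : ExtVal (RatIcc u v) f x fx)
    (hf'x : ExtVal (RatIcc u v) f' x f'x)
    (hne : f'x ≠ 0) :
    ∃ b' ∈ RatIcc u v, ∃ b'' ∈ RatIcc u v, f b' < fx ∧ fx < f b'' := by
  exact extremes_and_uniform_derivatives' u v x hux hxv f f' hunif fx f'x hfx hf'x hne
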